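/- Let k ≥ ℓ ≥ 2, n ≥ k + ℓ, with k = ℓ allowed only together with the hypothesis below. Suppose F ⊆ C([n],k) and G ⊆ C([n],ℓ) are shifted cross-intersecting families such that p(G) > 0 for all G ∈ G, where p(G) is the maximal p ≥ 0 with |G ∩ [2p + k − ℓ]| ≥ p. Define φ(G) = G Δ [2p(G) + k − ℓ]. Then: (i) |φ(G)| = k for each G ∈ G; (ii) φ is injective on G and φ(G) ∉ F for every G ∈ G. -/

import Mathlib

/-- The shifting partial order on finite sets of naturals. -/
def prec (A B : Finset ℕ) : Prop :=
  A.card = B.card ∧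
    ∀ i < A.card, (A.sort (· ≤ ·)).getD i 0 ≤ (B.sort (· ≤ ·)).getD i 0

/-- A family of r-subsets of [n] is shifted (initial). -/
def IsShifted (n r : ℕ) (F : Finset (Finset ℕ)) : Prop :=
  ∀ A ∈ (Finset.Icc 1 n).powersetCard r, ∀ B ∈ F, prec A B → A ∈ F

/-- p(G): the maximal p with |G ∩ [2p + k − ℓ]| ≥ p. -/
def pval (k l : ℕ) (G : Finset ℕ) : ℕ :=
  (Finset.range (l + 1)).sup
    (fun p => if p ≤ (G ∩ Finset.Icc 1 (2 * p + k - l)).card then p else 0)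

/-- φ(G) = G Δ [2p(G) + k − ℓ]. -/
def phi (k l : ℕ) (G : Finset ℕ) : Finset ℕ :=
  symmDiff G (Finset.Icc 1 (2 * pval k l G + k - l))

open Finset

section Aux

lemma take_filter_len (t : ℕ) : ∀ (L : List ℕ), L.Pairwise (· ≤ ·) → ∀ j,
    ((L.take j).filter (fun x => x ≤ t)).length
      = min j ((L.filter (fun x => x ≤ t)).length) := by
  intro L
  induction L with
  | nil => intro _ j; simp
  | cons a L ih =>
    intro hs j
    have hsL : L.Pairwise (· ≤ ·) := hs.of_cons
    cases j with
    | zero => simp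
    | succ j' =>
      by_cases hat : a ≤ t
      · simp only [List.take_succ_cons, List.filter_cons, hat, decide_true, if_true,
          List.length_cons, ih hsL j']
        omega
      · have hall : ∀ x ∈ L, ¬ x ≤ t := by
          intro x hx hxt
          exact hat (le_trans (List.rel_of_pairwise_cons hs hx) hxt)
        have h1 : (L.filter (fun x => x ≤ t)) = [] := by
          rw [List.filter_eq_nil_iff]
          intro x hx
          simpa using hall x hx
        have h2 : ((L.take j').filter (fun x => x ≤ t)) = [] := by
          rw [List.filter_eq_nil_iff]
          intro x hx
          simpa using hall x (List.mem_of_mem_take hx)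
        simp [List.filter_cons, hat, h1, h2]

lemma filter_card_eq (A : Finset ℕ) (t : ℕ) :
    (A.filter (· ≤ t)).card = ((A.sort (· ≤ ·)).filter (fun x => x ≤ t)).length := by
  have h1 : A.filter (· ≤ t) = ((A.sort (· ≤ ·)).filter (fun x => x ≤ t)).toFinset := by
    ext x
    simp [List.mem_filter, Finset.mem_sort]
  rw [h1, List.toFinset_card_of_nodup ((Finset.sort_nodup A _).filter _)]

lemma sorted_getElem_le {L : List ℕ} (hs : L.Pairwise (· ≤ ·)) {i j : ℕ} (hij : i ≤ j)
    (hj : j < L.length) : L[i]'(lt_of_le_of_lt hij hj) ≤ L[j] := by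
  rcases eq_or_lt_of_le hij with rfl | hlt
  · exact le_refl _
  · exact List.pairwise_iff_getElem.mp hs i j _ hj hlt

lemma prec_of_counts (A B : Finset ℕ) (hcard : A.card = B.card)
    (h : ∀ t, (B.filter (· ≤ t)).card ≤ (A.filter (· ≤ t)).card) : prec A B := by
  refine ⟨hcard, ?_⟩
  intro i hi
  set LA := A.sort (· ≤ ·) with hLA
  set LB := B.sort (· ≤ ·) with hLB
  have hlenA : LA.length = A.card := Finset.length_sort _
  have hlenB : LB.length = B.card := Finset.length_sort _
  have hiA : i < LA.length := by omega
  have hiB : i < LB.length := by omega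
  set t := LB.getD i 0 with ht
  have htB : t = LB[i] := List.getD_eq_getElem LB 0 hiB
  have hsA : LA.Pairwise (· ≤ ·) := Finset.pairwise_sort _ _
  have hsB : LB.Pairwise (· ≤ ·) := Finset.pairwise_sort _ _
  have hBcount : i + 1 ≤ (LB.filter (fun x => x ≤ t)).length := by
    have heq : ((LB.take (i+1)).filter (fun x => x ≤ t)) = LB.take (i+1) := by
      rw [List.filter_eq_self]
      intro x hx
      obtain ⟨j, hj, hxj⟩ := List.getElem_of_mem hx
      have hthis : (LB.take (i+1))[j] = LB[j]'(by rw [List.length_take] at hj; omega) :=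
        List.getElem_take
      rw [List.length_take] at hj
      have hji : j ≤ i := by omega
      subst hxj
      rw [hthis]
      simpa [htB] using sorted_getElem_le hsB hji hiB
    have h2 := take_filter_len t LB hsB (i+1)
    rw [heq, List.length_take] at h2
    omega
  rw [List.getD_eq_getElem LA 0 hiA]
  by_contra hcon
  push_neg at hcon
  have hAcount : (LA.filter (fun x => x ≤ t)).length ≤ i := by
    have hdec : LA = LA.take i ++ LA.drop i := (List.take_append_drop i LA).symm
    have hdrop : (LA.drop i).filter (fun x => x ≤ t) = [] := by
      rw [List.filter_eq_nil_iff]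
      intro x hx
      obtain ⟨j, hj, hxj⟩ := List.getElem_of_mem hx
      have hget : (LA.drop i)[j] = LA[i+j]'(by rw [List.length_drop] at hj; omega) := by
        rw [List.getElem_drop]
      have hle : LA[i] ≤ LA[i+j]'(by rw [List.length_drop] at hj; omega) :=
        sorted_getElem_le hsA (by omega) (by rw [List.length_drop] at hj; omega)
      subst hxj
      rw [hget]
      simp only [decide_eq_true_eq]
      omega
    calc (LA.filter (fun x => x ≤ t)).length
        = ((LA.take i).filter (fun x => x ≤ t)).length
          + ((LA.drop i).filter (fun x => x ≤ t)).length := by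
          conv_lhs => rw [hdec]
          rw [List.filter_append, List.length_append]
      _ ≤ i := by
          rw [hdrop]
          have h5 := List.length_filter_le (fun x => decide (x ≤ t)) (LA.take i)
          have h6 : (LA.take i).length ≤ i := by rw [List.length_take]; omega
          simpa using le_trans h5 h6
  have hc1 : (B.filter (· ≤ t)).card = (LB.filter (fun x => x ≤ t)).length :=
    filter_card_eq B t
  have hc2 : (A.filter (· ≤ t)).card = (LA.filter (fun x => x ≤ t)).length :=
    filter_card_eq A t
  have := h t
  omega

lemma card_symmDiff' (s t : Finset ℕ) :
    (symmDiff s t).card = (s \ t).card + (t \ s).card := by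
  rw [symmDiff_def, sup_eq_union, Finset.card_union_of_disjoint]
  exact disjoint_sdiff_sdiff

/-- pval is attained. -/
lemma pval_spec (k l : ℕ) (B : Finset ℕ) :
    pval k l B ≤ (B ∩ Finset.Icc 1 (2 * pval k l B + k - l)).card := by
  obtain ⟨q, hq, heq⟩ := Finset.exists_mem_eq_sup (Finset.range (l + 1))
    (by simp) (fun p => if p ≤ (B ∩ Finset.Icc 1 (2 * p + k - l)).card then p else 0)
  rw [pval, heq]
  by_cases hcond : q ≤ (B ∩ Finset.Icc 1 (2 * q + k - l)).card
  · simpa [hcond] using hcond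
  · simp [hcond]

/-- pval is maximal. -/
lemma pval_max (k l : ℕ) (B : Finset ℕ) (q : ℕ) (hq : q ≤ l)
    (hcond : q ≤ (B ∩ Finset.Icc 1 (2 * q + k - l)).card) : q ≤ pval k l B := by
  have := Finset.le_sup (f := fun p => if p ≤ (B ∩ Finset.Icc 1 (2 * p + k - l)).card then p else 0)
    (Finset.mem_range.mpr (Nat.lt_succ_of_le hq))
  have h0 : q = (fun p => if p ≤ (B ∩ Finset.Icc 1 (2 * p + k - l)).card then p else 0) q := by
    simp [hcond]
  rw [pval]
  exact h0.le.trans this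

lemma pval_le (k l : ℕ) (B : Finset ℕ) : pval k l B ≤ l := by
  apply Finset.sup_le
  intro p hp
  rw [Finset.mem_range] at hp
  split <;> omega

/-- exact count at pval -/
lemma pval_count (k l : ℕ) (B : Finset ℕ) (hcard : B.card = l) :
    (B ∩ Finset.Icc 1 (2 * pval k l B + k - l)).card = pval k l B := by
  have h1 := pval_spec k l B
  have hpl : pval k l B ≤ l := pval_le k l B
  have h2 : (B ∩ Finset.Icc 1 (2 * pval k l B + k - l)).card ≤ pval k l B := by
    by_contra hcon
    push_neg at hcon
    rcases eq_or_lt_of_le hpl with heq | hplt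
    · have hBle : (B ∩ Finset.Icc 1 (2 * pval k l B + k - l)).card ≤ B.card :=
        Finset.card_le_card Finset.inter_subset_left
      omega
    · have hsub : B ∩ Finset.Icc 1 (2 * pval k l B + k - l)
          ⊆ B ∩ Finset.Icc 1 (2 * (pval k l B + 1) + k - l) :=
        Finset.inter_subset_inter le_rfl (Finset.Icc_subset_Icc le_rfl (by omega))
      have h7 := pval_max k l B (pval k l B + 1) (by omega)
        (le_trans (by omega) (Finset.card_le_card hsub))
      omega
  omega

/-- strict bound beyond pval -/
lemma pval_count_lt (k l : ℕ) (B : Finset ℕ) (q : ℕ) (hq : q ≤ l) (hgt : pval k l B < q) :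
    (B ∩ Finset.Icc 1 (2 * q + k - l)).card < q := by
  by_contra hcon
  push_neg at hcon
  exact absurd (pval_max k l B q hq hcon) (by omega)

lemma inter_Icc_eq_filter (B : Finset ℕ) (hB : ∀ x ∈ B, 1 ≤ x) (t : ℕ) :
    B ∩ Finset.Icc 1 t = B.filter (· ≤ t) := by
  ext x
  simp only [Finset.mem_inter, Finset.mem_Icc, Finset.mem_filter]
  constructor
  · rintro ⟨h1, _, h3⟩; exact ⟨h1, h3⟩
  · rintro ⟨h1, h2⟩; exact ⟨h1, hB x h1, h2⟩

lemma split_count (B : Finset ℕ) (hB : ∀ x ∈ B, 1 ≤ x) (m t : ℕ) (hmt : m ≤ t) :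
    (B.filter (· ≤ t)).card = (B ∩ Finset.Icc 1 m).card + (B ∩ Finset.Icc (m+1) t).card := by
  rw [← Finset.card_union_of_disjoint]
  · congr 1
    ext x
    simp only [Finset.mem_filter, Finset.mem_union, Finset.mem_inter, Finset.mem_Icc]
    constructor
    · rintro ⟨hxB, hxt⟩
      have h1 := hB x hxB
      by_cases hxm : x ≤ m
      · exact Or.inl ⟨hxB, h1, hxm⟩
      · exact Or.inr ⟨hxB, by omega, hxt⟩
    · rintro (⟨hxB, _, hxm⟩ | ⟨hxB, _, hxt⟩)
      · exact ⟨hxB, by omega⟩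
      · exact ⟨hxB, hxt⟩
  · rw [Finset.disjoint_left]
    rintro x hx1 hx2
    rw [Finset.mem_inter, Finset.mem_Icc] at hx1 hx2
    omega

lemma split_inter (B : Finset ℕ) (hB : ∀ x ∈ B, 1 ≤ x) (m t : ℕ) (hmt : m ≤ t) :
    (B ∩ Finset.Icc 1 t).card = (B ∩ Finset.Icc 1 m).card + (B ∩ Finset.Icc (m+1) t).card := by
  rw [inter_Icc_eq_filter B hB]
  exact split_count B hB m t hmt

end Aux

/-- Lemma 5.1 (i), (ii). -/
theorem stmt17 (n k l : ℕ) (hl : 2 ≤ l) (hlk : l ≤ k) (hn : k + l ≤ n)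
    (F G : Finset (Finset ℕ))
    (hF : F ⊆ (Finset.Icc 1 n).powersetCard k)
    (hG : G ⊆ (Finset.Icc 1 n).powersetCard l)
    (hsF : IsShifted n k F) (hsG : IsShifted n l G)
    (hcross : ∀ A ∈ F, ∀ B ∈ G, (A ∩ B).Nonempty)
    (hp : ∀ B ∈ G, 0 < pval k l B) :
    (∀ B ∈ G, (phi k l B).card = k) ∧
    Set.InjOn (phi k l) ↑G ∧
    (∀ B ∈ G, phi k l B ∉ F) := by
  -- part (i)
  have key1 : ∀ B ∈ G, (phi k l B).card = k := by
    intro B hBG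
    obtain ⟨hBsub, hBcard⟩ := Finset.mem_powersetCard.mp (hG hBG)
    have hple := pval_le k l B
    have hcount := pval_count k l B hBcard
    rw [phi, card_symmDiff']
    have e1 := Finset.card_sdiff_add_card_inter B (Finset.Icc 1 (2 * pval k l B + k - l))
    have e2 := Finset.card_sdiff_add_card_inter (Finset.Icc 1 (2 * pval k l B + k - l)) B
    have e3 : (Finset.Icc 1 (2 * pval k l B + k - l)).card = 2 * pval k l B + k - l := by
      rw [Nat.card_Icc]; omega
    have e4 : (Finset.Icc 1 (2 * pval k l B + k - l) ∩ B).card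
        = (B ∩ Finset.Icc 1 (2 * pval k l B + k - l)).card := by rw [Finset.inter_comm]
    omega
  -- injectivity, WLOG form
  have key2 : ∀ B1 ∈ G, ∀ B2 ∈ G, pval k l B1 ≤ pval k l B2 →
      phi k l B1 = phi k l B2 → B1 = B2 := by
    intro B1 hB1G B2 hB2G hple heq
    obtain ⟨hB1sub, hB1card⟩ := Finset.mem_powersetCard.mp (hG hB1G)
    obtain ⟨hB2sub, hB2card⟩ := Finset.mem_powersetCard.mp (hG hB2G)
    have hB1one : ∀ x ∈ B1, 1 ≤ x := fun x hx => (Finset.mem_Icc.mp (hB1sub hx)).1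
    rw [phi, phi] at heq
    rcases eq_or_lt_of_le hple with heqp | hlt
    · rw [← heqp] at heq
      calc B1 = symmDiff (symmDiff B1 (Finset.Icc 1 (2 * pval k l B1 + k - l)))
                (Finset.Icc 1 (2 * pval k l B1 + k - l)) := (symmDiff_symmDiff_cancel_right _ _).symm
        _ = symmDiff (symmDiff B2 (Finset.Icc 1 (2 * pval k l B1 + k - l)))
                (Finset.Icc 1 (2 * pval k l B1 + k - l)) := by rw [heq]
        _ = B2 := symmDiff_symmDiff_cancel_right _ _
    · exfalso
      have hp2l := pval_le k l B2
      have hp1l := pval_le k l B1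
      have hm12 : 2 * pval k l B1 + k - l ≤ 2 * pval k l B2 + k - l := by omega
      set m1 := 2 * pval k l B1 + k - l with hm1
      set m2 := 2 * pval k l B2 + k - l with hm2
      have hIJ : symmDiff (Finset.Icc 1 m1) (Finset.Icc 1 m2) = Finset.Icc (m1+1) m2 := by
        ext x
        simp only [Finset.mem_symmDiff, Finset.mem_Icc]
        omega
      have hB2eq : B2 = symmDiff B1 (Finset.Icc (m1+1) m2) := by
        calc B2 = symmDiff (symmDiff B2 (Finset.Icc 1 m2)) (Finset.Icc 1 m2) :=
              (symmDiff_symmDiff_cancel_right _ _).symm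
          _ = symmDiff (symmDiff B1 (Finset.Icc 1 m1)) (Finset.Icc 1 m2) := by rw [heq]
          _ = symmDiff B1 (symmDiff (Finset.Icc 1 m1) (Finset.Icc 1 m2)) := symmDiff_assoc _ _ _
          _ = symmDiff B1 (Finset.Icc (m1+1) m2) := by rw [hIJ]
      have hB2I : B2 ∩ Finset.Icc 1 m2
          = symmDiff (B1 ∩ Finset.Icc 1 m2) (Finset.Icc (m1+1) m2) := by
        rw [hB2eq]
        ext x
        simp only [Finset.mem_symmDiff, Finset.mem_inter, Finset.mem_Icc]
        by_cases hx : x ∈ B1 <;> simp only [hx] <;> simp <;> omega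
      have hcard2 : (B2 ∩ Finset.Icc 1 m2).card = pval k l B2 := pval_count k l B2 hB2card
      have hfinal : (symmDiff (B1 ∩ Finset.Icc 1 m2) (Finset.Icc (m1+1) m2)).card
          = pval k l B2 := by rw [← hB2I]; exact hcard2
      have hsd := card_symmDiff' (B1 ∩ Finset.Icc 1 m2) (Finset.Icc (m1+1) m2)
      have e1 := Finset.card_sdiff_add_card_inter (B1 ∩ Finset.Icc 1 m2)
        (Finset.Icc (m1+1) m2)
      have e2 := Finset.card_sdiff_add_card_inter (Finset.Icc (m1+1) m2)
        (B1 ∩ Finset.Icc 1 m2)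
      have e3 : (Finset.Icc (m1+1) m2).card = m2 - m1 := by rw [Nat.card_Icc]; omega
      have e4 : (B1 ∩ Finset.Icc 1 m2) ∩ Finset.Icc (m1+1) m2 = B1 ∩ Finset.Icc (m1+1) m2 := by
        ext x
        simp only [Finset.mem_inter, Finset.mem_Icc]
        by_cases hx : x ∈ B1 <;> simp only [hx] <;> simp <;> omega
      have e5 : (Finset.Icc (m1+1) m2 ∩ (B1 ∩ Finset.Icc 1 m2)).card
          = ((B1 ∩ Finset.Icc 1 m2) ∩ Finset.Icc (m1+1) m2).card := by rw [Finset.inter_comm]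
      have e6 := congrArg Finset.card e4
      have hX := split_inter B1 hB1one m1 m2 hm12
      have hc1 : (B1 ∩ Finset.Icc 1 m1).card = pval k l B1 := pval_count k l B1 hB1card
      have hlt2 : (B1 ∩ Finset.Icc 1 m2).card < pval k l B2 :=
        pval_count_lt k l B1 (pval k l B2) hp2l hlt
      omega
  -- part (iii): phi B is never in F
  have key3 : ∀ B ∈ G, phi k l B ∉ F := by
    intro B hBG hphiF
    obtain ⟨hBsub, hBcard⟩ := Finset.mem_powersetCard.mp (hG hBG)
    have hBone : ∀ x ∈ B, 1 ≤ x := fun x hx => (Finset.mem_Icc.mp (hBsub hx)).1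
    have hBn : ∀ x ∈ B, x ≤ n := fun x hx => (Finset.mem_Icc.mp (hBsub hx)).2
    have hple : pval k l B ≤ l := pval_le k l B
    set p := pval k l B with hpd
    set m := 2 * p + k - l with hmd
    have hcount : (B ∩ Finset.Icc 1 m).card = p := pval_count k l B hBcard
    set S := Finset.Icc (m+1) n \ B with hSd
    set L := S.sort (· ≤ ·) with hLd
    set E := (L.take (l - p)).toFinset with hEd
    set C := B.filter (· ≤ m) with hCd
    have hLs : L.Pairwise (· ≤ ·) := Finset.pairwise_sort _ _
    have hLnd : L.Nodup := Finset.sort_nodup _ _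
    have hLlen : L.length = S.card := Finset.length_sort _
    have hCeq : C = B ∩ Finset.Icc 1 m := (inter_Icc_eq_filter B hBone m).symm
    have hCcard : C.card = p := by rw [hCeq]; exact hcount
    have hESmem : ∀ x ∈ E, x ∈ S := by
      intro x hx
      rw [hEd, List.mem_toFinset] at hx
      exact (Finset.mem_sort _).mp (List.mem_of_mem_take hx)
    have hSmem : ∀ x ∈ S, (m+1 ≤ x ∧ x ≤ n) ∧ x ∉ B := by
      intro x hx
      rw [hSd, Finset.mem_sdiff, Finset.mem_Icc] at hx; exact hx
    have eqa : S.card + (Finset.Icc (m+1) n ∩ B).card = (Finset.Icc (m+1) n).card :=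
      Finset.card_sdiff_add_card_inter _ _
    have eqIcc : (Finset.Icc (m+1) n).card = n - m := by rw [Nat.card_Icc]; omega
    have hBn' : B ∩ Finset.Icc 1 n = B := by
      rw [Finset.inter_eq_left]; exact hBsub
    have eqb : (B ∩ Finset.Icc 1 m).card + (B ∩ Finset.Icc (m+1) n).card = l := by
      have hsi := split_inter B hBone m n (by omega)
      rw [hBn', hBcard] at hsi
      omega
    have eqc : (Finset.Icc (m+1) n ∩ B).card = (B ∩ Finset.Icc (m+1) n).card := by
      rw [Finset.inter_comm]
    have hSge : l - p ≤ S.card := by omega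
    have hEcard : E.card = l - p := by
      rw [hEd, List.toFinset_card_of_nodup (hLnd.sublist (List.take_sublist _ _))]
      rw [List.length_take, hLlen]
      omega
    have hdisjCE : Disjoint C E := by
      rw [Finset.disjoint_left]
      intro x hxC hxE
      have h1 : x ≤ m := (Finset.mem_filter.mp hxC).2
      have h2 := (hSmem x (hESmem x hxE)).1.1
      omega
    have hG''card : (C ∪ E).card = l := by
      rw [Finset.card_union_of_disjoint hdisjCE, hCcard, hEcard]; omega
    have hG''sub : C ∪ E ⊆ Finset.Icc 1 n := by
      intro x hx
      rcases Finset.mem_union.mp hx with hxC | hxE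
      · exact hBsub (Finset.mem_filter.mp hxC).1
      · have := (hSmem x (hESmem x hxE)).1
        rw [Finset.mem_Icc]; omega
    have hcnt : ∀ t, (B.filter (· ≤ t)).card ≤ ((C ∪ E).filter (· ≤ t)).card := by
      intro t
      by_cases htm : t ≤ m
      · have hBC : B.filter (· ≤ t) = C.filter (· ≤ t) := by
          rw [hCd, Finset.filter_filter]
          apply Finset.filter_congr
          intro x hx
          constructor
          · intro h; exact ⟨by omega, h⟩
          · intro h; exact h.2
        rw [hBC]
        exact Finset.card_le_card (Finset.filter_subset_filter _ Finset.subset_union_left)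
      · push_neg at htm
        have hLHS := split_count B hBone m t (by omega)
        have hCfull : C.filter (· ≤ t) = C := by
          apply Finset.filter_true_of_mem
          intro x hx
          have : x ≤ m := (Finset.mem_filter.mp hx).2
          omega
        have hRHS : ((C ∪ E).filter (· ≤ t)).card = p + (E.filter (· ≤ t)).card := by
          rw [Finset.filter_union, Finset.card_union_of_disjoint
            (Finset.disjoint_filter_filter hdisjCE), hCfull, hCcard]
        have hEf : (E.filter (· ≤ t)).card = min (l - p) ((S.filter (· ≤ t)).card) := by
          have h1 : E.filter (· ≤ t) = ((L.take (l-p)).filter (fun x => x ≤ t)).toFinset := by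
            ext x
            simp [hEd, List.mem_toFinset, List.mem_filter, Finset.mem_filter]
          rw [h1, List.toFinset_card_of_nodup
            ((hLnd.sublist (List.take_sublist _ _)).filter _)]
          rw [take_filter_len t L hLs (l-p), ← filter_card_eq S t]
        set j := (B ∩ Finset.Icc (m+1) t).card with hjd
        have hjle : j ≤ l - p := by
          have hsub : B ∩ Finset.Icc (m+1) t ⊆ B ∩ Finset.Icc (m+1) n := by
            intro x hx
            rw [Finset.mem_inter, Finset.mem_Icc] at hx ⊢
            exact ⟨hx.1, hx.2.1, hBn x hx.1⟩
          have := Finset.card_le_card hsub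
          omega
        have hjS : j ≤ (S.filter (· ≤ t)).card := by
          rcases Nat.eq_zero_or_pos j with hj0 | hjpos
          · omega
          · have hjt' : (B ∩ Finset.Icc (m+1) (min t n)).card = j := by
              rw [hjd]
              congr 1
              ext x
              rw [Finset.mem_inter, Finset.mem_Icc, Finset.mem_inter, Finset.mem_Icc]
              constructor
              · rintro ⟨h1, h2, h3⟩; exact ⟨h1, h2, by omega⟩
              · rintro ⟨h1, h2, h3⟩; exact ⟨h1, h2, by have := hBn x h1; omega⟩
            have hSfil : S.filter (· ≤ t) = Finset.Icc (m+1) (min t n) \ B := by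
              ext x
              simp only [Finset.mem_filter, hSd, Finset.mem_sdiff, Finset.mem_Icc]
              by_cases hx : x ∈ B <;> simp only [hx] <;> simp <;> omega
            have e7 := Finset.card_sdiff_add_card_inter (Finset.Icc (m+1) (min t n)) B
            have e8 : (Finset.Icc (m+1) (min t n)).card = min t n - m := by
              rw [Nat.card_Icc]; omega
            have e9 : (Finset.Icc (m+1) (min t n) ∩ B).card = j := by
              rw [Finset.inter_comm]; exact hjt'
            have e10 := congrArg Finset.card hSfil
            have hmt' : m + 1 ≤ min t n := by
              have hne : (B ∩ Finset.Icc (m+1) (min t n)).Nonempty := by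
                rw [← Finset.card_pos, hjt']; omega
              obtain ⟨x, hxmem⟩ := hne
              rw [Finset.mem_inter, Finset.mem_Icc] at hxmem
              omega
            have ht2j : m + 2*j ≤ min t n := by
              by_contra hcon
              push_neg at hcon
              have hjl : p + j ≤ l := by omega
              have hcl : (B ∩ Finset.Icc 1 (min t n)).card = p + j := by
                rw [split_inter B hBone m (min t n) (by omega), hcount, hjt']
              have hsub2 : B ∩ Finset.Icc 1 (min t n)
                  ⊆ B ∩ Finset.Icc 1 (2*(p+j)+k-l) :=
                Finset.inter_subset_inter le_rfl (Finset.Icc_subset_Icc le_rfl (by omega))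
              have hlt3 := pval_count_lt k l B (p+j) hjl (by omega)
              have := Finset.card_le_card hsub2
              omega
            omega
        rw [hRHS, hEf, hLHS, hcount]
        omega
    have hprec : prec (C ∪ E) B := prec_of_counts _ _ (by rw [hG''card, hBcard]) hcnt
    have hmemP : (C ∪ E) ∈ (Finset.Icc 1 n).powersetCard l :=
      Finset.mem_powersetCard.mpr ⟨hG''sub, hG''card⟩
    have hinG : C ∪ E ∈ G := hsG _ hmemP B hBG hprec
    obtain ⟨x, hx⟩ := hcross _ hphiF _ hinG
    rw [Finset.mem_inter] at hx
    obtain ⟨hx1, hx2⟩ := hx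
    rw [phi, Finset.mem_symmDiff, ← hpd, ← hmd] at hx1
    rcases Finset.mem_union.mp hx2 with hxC | hxE
    · have h1 := Finset.mem_filter.mp hxC
      have h2 := hBone x h1.1
      rcases hx1 with ⟨_, hnot⟩ | ⟨_, hnotB⟩
      · exact hnot (Finset.mem_Icc.mpr ⟨h2, h1.2⟩)
      · exact hnotB h1.1
    · have h3 := hSmem x (hESmem x hxE)
      rcases hx1 with ⟨hinB, _⟩ | ⟨hin, _⟩
      · exact h3.2 hinB
      · rw [Finset.mem_Icc] at hin
        omega
  refine ⟨key1, ?_, key3⟩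
  intro B1 h1 B2 h2 heq
  rw [Finset.mem_coe] at h1 h2
  rcases le_total (pval k l B1) (pval k l B2) with h | h
  · exact key2 B1 h1 B2 h2 h heq
  · exact (key2 B2 h2 B1 h1 h heq.symm).symm
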